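/- Let P be a compact convex set in the Euclidean plane ℝ² with nonempty interior, and let q be a point with q ∉ P. Then there exist points b and c in ℝ² such that the triangle with vertices q, b, c circumscribes P (i.e., P is contained in the convex hull of {q,b,c} and each of the three closed segments [q,b], [q,c], [b,c] has nonempty intersection with P) and the midpoint of the segment [b,c] lies in P. Moreover, such a triangle is unique: if both △qbc and △qb'c' circumscribe P with the midpoints of [b,c] and of [b',c'] lying in P, then {b,c} = {b',c'}. -/

import Mathlib

open EuclideanGeometry Real Set

/-- A triangle with vertices `q`, `b`, `c` circumscribes `P`: `P` is contained in the
convex hull of the vertices and each of the three closed sides meets `P`. -/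
def Circumscribes (q b c : EuclideanSpace ℝ (Fin 2)) (P : Set (EuclideanSpace ℝ (Fin 2))) : Prop :=
  P ⊆ convexHull ℝ {q, b, c} ∧
  (segment ℝ q b ∩ P).Nonempty ∧
  (segment ℝ q c ∩ P).Nonempty ∧
  (segment ℝ b c ∩ P).Nonempty

local notation "E2" => EuclideanSpace ℝ (Fin 2)


/-- If a set with nonempty interior is contained in a level set of a continuous
linear functional, the functional is zero. -/
lemma hyper_zero {P : Set E2} (h : (interior P).Nonempty) (k : E2 →L[ℝ] ℝ) (r : ℝ)
    (hP : ∀ p ∈ P, k p = r) : k = 0 := by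
  obtain ⟨z, hz⟩ := h
  obtain ⟨ε, hε, hball⟩ := Metric.isOpen_iff.1 isOpen_interior z hz
  ext y
  rcases eq_or_ne y 0 with rfl | hy
  · simp
  have hny : 0 < ‖y‖ := norm_pos_iff.2 hy
  have hmem : z + (ε / (2 * ‖y‖)) • y ∈ P := by
    apply interior_subset (hball ?_)
    rw [Metric.mem_ball, dist_eq_norm]
    have : ‖z + (ε / (2 * ‖y‖)) • y - z‖ = (ε / (2 * ‖y‖)) * ‖y‖ := by
      rw [add_sub_cancel_left, norm_smul, Real.norm_eq_abs, abs_of_pos (by positivity)]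
    rw [this]
    rw [div_mul_eq_mul_div, mul_comm]
    rw [div_lt_iff₀ (by positivity)]
    nlinarith
  have h1 := hP _ hmem
  have h2 := hP _ (interior_subset hz)
  rw [map_add, map_smul, h2] at h1
  have : (ε / (2 * ‖y‖)) * k y = 0 := by
    have := h1; simpa using (by linarith : r + (ε / (2 * ‖y‖)) • k y - r = 0)
  have hne : ε / (2 * ‖y‖) ≠ 0 := by positivity
  simpa [hne] using this

set_option maxHeartbeats 2000000 in
/-- Cone setup: two directions `u, v` from `q` touching `P`, with dual coordinates
`σ, τ` such that `P - q` lies in the cone spanned by `u, v`. -/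
lemma cone_setup {P : Set E2} (hPc : IsCompact P) (hPconv : Convex ℝ P)
    (hPint : (interior P).Nonempty) {q : E2} (hq : q ∉ P) :
    ∃ (u v : E2) (σ τ : E2 →L[ℝ] ℝ),
      q + u ∈ P ∧ q + v ∈ P ∧
      (∀ x : E2, x = σ x • u + τ x • v) ∧
      σ u = 1 ∧ σ v = 0 ∧ τ u = 0 ∧ τ v = 1 ∧
      (∀ p ∈ P, 0 ≤ σ (p - q) ∧ 0 ≤ τ (p - q)) := by
  have hPne : P.Nonempty := hPint.mono interior_subset
  obtain ⟨f, u0, hqu0, hPu0⟩ :=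
    geometric_hahn_banach_point_closed hPconv hPc.isClosed hq
  have hfpos : ∀ p ∈ P, 0 < f (p - q) := by
    intro p hp
    have := hPu0 p hp
    rw [map_sub]; linarith
  set w0 : ℝ := f (EuclideanSpace.single 0 1) with hw0
  set w1 : ℝ := f (EuclideanSpace.single 1 1) with hw1
  have hrep : ∀ x : E2, x = x 0 • EuclideanSpace.single 0 1 + x 1 • EuclideanSpace.single 1 1 := by
    intro x; ext i; fin_cases i <;> simp [EuclideanSpace.single_apply]
  have hfrep : ∀ x : E2, f x = x 0 * w0 + x 1 * w1 := by
    intro x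
    conv_lhs => rw [hrep x]
    simp [map_add, map_smul]
    rw [hw0, hw1]
  set h : E2 →L[ℝ] ℝ := w0 • EuclideanSpace.proj 1 - w1 • EuclideanSpace.proj 0 with hh
  have hhrep : ∀ x : E2, h x = w0 * x 1 - w1 * x 0 := by
    intro x; simp [hh]
  have hwne : 0 < w0 ^ 2 + w1 ^ 2 := by
    rcases eq_or_ne w0 0 with h0 | h0
    · rcases eq_or_ne w1 0 with h1 | h1
      · exfalso
        obtain ⟨p, hp⟩ := hPne
        have := hfpos p hp
        rw [hfrep] at this
        rw [h0, h1] at this; simp at this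
      · positivity
    · positivity
  have hker : ∀ x : E2, f x = 0 → h x = 0 → x = 0 := by
    intro x hfx hhx
    rw [hfrep] at hfx; rw [hhrep] at hhx
    have hx0 : x 0 = 0 := by
      have h3 : (w0 ^ 2 + w1 ^ 2) * x 0 = 0 := by linear_combination w0 * hfx - w1 * hhx
      exact (mul_eq_zero.mp h3).resolve_left hwne.ne'
    have hx1 : x 1 = 0 := by
      have h3 : (w0 ^ 2 + w1 ^ 2) * x 1 = 0 := by linear_combination w1 * hfx + w0 * hhx
      exact (mul_eq_zero.mp h3).resolve_left hwne.ne'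
    have := hrep x
    rw [hx0, hx1] at this; simpa using this
  -- slope function
  set g : E2 → ℝ := fun p => h (p - q) / f (p - q) with hg
  have hgcont : ContinuousOn g P := by
    apply ContinuousOn.div
    · exact (h.continuous.comp (continuous_id.sub continuous_const)).continuousOn
    · exact (f.continuous.comp (continuous_id.sub continuous_const)).continuousOn
    · exact fun p hp => (hfpos p hp).ne'
  obtain ⟨p1, hp1P, hp1min⟩ := hPc.exists_isMinOn hPne hgcont
  obtain ⟨p2, hp2P, hp2max⟩ := hPc.exists_isMaxOn hPne hgcont
  set u : E2 := p1 - q with hu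
  set v : E2 := p2 - q with hv
  set m1 : ℝ := g p1 with hm1
  set m2 : ℝ := g p2 with hm2
  have hfu : 0 < f u := hfpos p1 hp1P
  have hfv : 0 < f v := hfpos p2 hp2P
  have hgu : h u = m1 * f u := by
    rw [hm1]
    exact (div_mul_cancel₀ _ hfu.ne').symm
  have hgv : h v = m2 * f v := by
    rw [hm2]
    exact (div_mul_cancel₀ _ hfv.ne').symm
  have hm12 : m1 < m2 := by
    by_contra hcon
    push_neg at hcon
    have hall : ∀ p ∈ P, h (p - q) = m1 * f (p - q) := by
      intro p hp
      have h1 : m1 ≤ g p := hp1min hp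
      have h2 : g p ≤ m2 := hp2max hp
      have : g p = m1 := le_antisymm (h2.trans hcon) h1
      exact (div_eq_iff (hfpos p hp).ne').mp this
    set k : E2 →L[ℝ] ℝ := h - m1 • f with hk
    have hkP : ∀ p ∈ P, k p = h q - m1 * f q := by
      intro p hp
      have := hall p hp
      rw [map_sub, map_sub] at this
      simp only [hk, ContinuousLinearMap.sub_apply, ContinuousLinearMap.smul_apply, smul_eq_mul]
      linarith
    have hk0 := hyper_zero hPint k _ hkP
    -- evaluate k at y := w0 • e1 - w1 • e0
    set y : E2 := w0 • EuclideanSpace.single 1 1 - w1 • EuclideanSpace.single 0 1 with hy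
    have hfy : f y = 0 := by
      rw [hfrep]
      have hy0 : y 0 = -w1 := by simp [hy, EuclideanSpace.single_apply]
      have hy1 : y 1 = w0 := by simp [hy, EuclideanSpace.single_apply]
      rw [hy0, hy1]; ring
    have hhy : h y = w0 ^ 2 + w1 ^ 2 := by
      rw [hhrep]
      have hy0 : y 0 = -w1 := by simp [hy, EuclideanSpace.single_apply]
      have hy1 : y 1 = w0 := by simp [hy, EuclideanSpace.single_apply]
      rw [hy0, hy1]; ring
    have : k y = 0 := by rw [hk0]; simp
    simp only [hk, ContinuousLinearMap.sub_apply, ContinuousLinearMap.smul_apply,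
      smul_eq_mul, hfy, hhy, mul_zero, sub_zero] at this
    linarith
  set D : ℝ := f u * h v - h u * f v with hD
  have hDpos : 0 < D := by
    rw [hD, hgu, hgv]
    have h3 := mul_pos (mul_pos hfu hfv) (sub_pos.mpr hm12)
    nlinarith [h3]
  set σ : E2 →L[ℝ] ℝ := (1 / D) • (h v • f - f v • h) with hσ
  set τ : E2 →L[ℝ] ℝ := (1 / D) • (f u • h - h u • f) with hτ
  have hσa : ∀ x, σ x = (h v * f x - f v * h x) / D := by
    intro x
    simp [hσ, ContinuousLinearMap.smul_apply, ContinuousLinearMap.sub_apply, smul_eq_mul]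
    ring
  have hτa : ∀ x, τ x = (f u * h x - h u * f x) / D := by
    intro x
    simp [hτ, ContinuousLinearMap.smul_apply, ContinuousLinearMap.sub_apply, smul_eq_mul]
    ring
  have hσu : σ u = 1 := by
    rw [hσa, show h v * f u - f v * h u = D by rw [hD]; ring]
    exact div_self hDpos.ne'
  have hσv : σ v = 0 := by
    rw [hσa, show h v * f v - f v * h v = 0 by ring]
    exact zero_div _
  have hτu : τ u = 0 := by
    rw [hτa, show f u * h u - h u * f u = 0 by ring]
    exact zero_div _
  have hτv : τ v = 1 := by
    rw [hτa, show f u * h v - h u * f v = D by rw [hD]]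
    exact div_self hDpos.ne'
  clear_value σ τ
  have hdecomp : ∀ x : E2, x = σ x • u + τ x • v := by
    intro x
    have h1 : f (x - σ x • u - τ x • v) = 0 := by
      rw [map_sub, map_sub, map_smul, map_smul, hσa, hτa]
      field_simp [hDpos.ne']
      simp only [smul_eq_mul]; field_simp [hDpos.ne']; rw [hD]; ring
    have h2 : h (x - σ x • u - τ x • v) = 0 := by
      rw [map_sub, map_sub, map_smul, map_smul, hσa, hτa]
      field_simp [hDpos.ne']
      simp only [smul_eq_mul]; field_simp [hDpos.ne']; rw [hD]; ring
    have h0 : x - (σ x • u + τ x • v) = 0 := by rw [← sub_sub]; exact hker _ h1 h2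
    exact sub_eq_zero.mp h0
  refine ⟨u, v, σ, τ, ?_, ?_, hdecomp, hσu, hσv, hτu, hτv, ?_⟩
  · have : q + u = p1 := by rw [hu]; abel
    rw [this]; exact hp1P
  · have : q + v = p2 := by rw [hv]; abel
    rw [this]; exact hp2P
  · intro p hp
    have hgp1 : m1 ≤ g p := hp1min hp
    have hgp2 : g p ≤ m2 := hp2max hp
    have hfp := hfpos p hp
    have hhp : h (p - q) = g p * f (p - q) := by
      rw [hg]
      exact (div_mul_cancel₀ _ (hfpos p hp).ne').symm
    constructor
    · rw [hσa, hhp, hgv]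
      apply div_nonneg _ hDpos.le
      nlinarith [mul_nonneg (sub_nonneg.mpr hgp2) (mul_pos hfv hfp).le]
    · rw [hτa, hhp, hgu]
      apply div_nonneg _ hDpos.le
      nlinarith [mul_nonneg (sub_nonneg.mpr hgp1) (mul_pos hfu hfp).le]

set_option maxHeartbeats 2000000 in
lemma exists_triangle {P : Set E2} (hPc : IsCompact P) (hPconv : Convex ℝ P)
    (hPint : (interior P).Nonempty) {q : E2} (hq : q ∉ P)
    {u v : E2} {σ τ : E2 →L[ℝ] ℝ}
    (hu : q + u ∈ P) (hv : q + v ∈ P)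
    (hdec : ∀ x : E2, x = σ x • u + τ x • v)
    (hσu : σ u = 1) (hσv : σ v = 0) (hτu : τ u = 0) (hτv : τ v = 1)
    (hcone : ∀ p ∈ P, 0 ≤ σ (p - q) ∧ 0 ≤ τ (p - q)) :
    ∃ b c : E2, Circumscribes q b c P ∧ midpoint ℝ b c ∈ P := by
  have hPne : P.Nonempty := hPint.mono interior_subset
  set φ : E2 → ℝ := fun p => σ (p - q) * τ (p - q) with hφ
  have hφcont : ContinuousOn φ P := by
    exact ((σ.continuous.comp (continuous_id.sub continuous_const)).mul
      (τ.continuous.comp (continuous_id.sub continuous_const))).continuousOn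
  obtain ⟨pm, hpmP, hpmmax⟩ := hPc.exists_isMaxOn hPne hφcont
  set a := σ (pm - q) with ha
  set bb := τ (pm - q) with hbb
  obtain ⟨z, hz⟩ := hPint
  obtain ⟨ε, hε, hball⟩ := Metric.isOpen_iff.1 isOpen_interior z hz
  have hzP : z ∈ P := interior_subset hz
  have hune : u ≠ 0 := by rintro rfl; rw [add_zero] at hu; exact hq hu
  have hvne : v ≠ 0 := by rintro rfl; rw [add_zero] at hv; exact hq hv
  have hposcoord : ∀ (e : E2) (k : E2 →L[ℝ] ℝ), e ≠ 0 → k e = 1 →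
      (∀ p ∈ P, 0 ≤ k (p - q)) → 0 < k (z - q) := by
    intro e k he hke hkP
    rcases (hkP z hzP).lt_or_eq with h | h
    · exact h
    exfalso
    have hne : 0 < ‖e‖ := norm_pos_iff.2 he
    have h2e : (0:ℝ) < 2 * ‖e‖ := by linarith
    have htp : 0 < ε / (2 * ‖e‖) := div_pos hε h2e
    have hz'P : z - (ε / (2 * ‖e‖)) • e ∈ P := by
      apply interior_subset (hball _)
      rw [Metric.mem_ball, dist_eq_norm]
      have he2 : z - (ε / (2 * ‖e‖)) • e - z = -((ε / (2 * ‖e‖)) • e) := by abel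
      rw [he2, norm_neg, norm_smul, Real.norm_eq_abs, abs_of_pos htp]
      rw [div_mul_eq_mul_div, div_lt_iff₀ h2e]
      nlinarith
    have hc := hkP _ hz'P
    have he3 : z - (ε / (2 * ‖e‖)) • e - q = (z - q) - (ε / (2 * ‖e‖)) • e := by abel
    rw [he3, map_sub, map_smul, ← h, hke, smul_eq_mul, mul_one] at hc
    linarith
  have hposσ : 0 < σ (z - q) := hposcoord u σ hune hσu (fun p hp => (hcone p hp).1)
  have hposτ : 0 < τ (z - q) := hposcoord v τ hvne hτv (fun p hp => (hcone p hp).2)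
  have hab : 0 < a * bb := lt_of_lt_of_le (mul_pos hposσ hposτ) (hpmmax hzP)
  have ha0 : 0 ≤ a := (hcone pm hpmP).1
  have hb0 : 0 ≤ bb := (hcone pm hpmP).2
  have hapos : 0 < a := by
    rcases ha0.lt_or_eq with h | h
    · exact h
    · exfalso; rw [← h, zero_mul] at hab; exact lt_irrefl 0 hab
  have hbpos : 0 < bb := by
    rcases hb0.lt_or_eq with h | h
    · exact h
    · exfalso; rw [← h, mul_zero] at hab; exact lt_irrefl 0 hab
  -- supporting inequality at the maximizer
  have hsupp : ∀ p ∈ P, bb * σ (p - q) + a * τ (p - q) ≤ 2 * (a * bb) := by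
    intro p hp
    by_contra hcon
    push_neg at hcon
    set x := σ (p - q) with hx
    set y := τ (p - q) with hy
    set c := bb * x + a * y - 2 * (a * bb) with hc
    have hcpos : 0 < c := by rw [hc]; linarith
    set d := (x - a) * (y - bb) with hd
    have hdpos : (0:ℝ) < 2 * (|d| + 1) := by positivity
    set t := min 1 (c / (2 * (|d| + 1))) with ht
    have htpos : 0 < t := lt_min one_pos (div_pos hcpos hdpos)
    have ht1 : t ≤ 1 := min_le_left _ _
    have htc : t ≤ c / (2 * (|d| + 1)) := min_le_right _ _
    have hptP : (1 - t) • pm + t • p ∈ P := hPconv hpmP hp (by linarith) htpos.le (by ring)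
    have hco : (1 - t) • pm + t • p - q = (1 - t) • (pm - q) + t • (p - q) := by module
    have hφpt : φ ((1 - t) • pm + t • p) = a * bb + (t * c + t ^ 2 * d) := by
      show σ _ * τ _ = _
      rw [hco, map_add, map_add, map_smul, map_smul, map_smul, map_smul]
      simp only [smul_eq_mul, ← ha, ← hbb, ← hx, ← hy]
      rw [hc, hd]; ring
    have h1 : t * |d| ≤ c / 2 := by
      have e1 : (c / (2 * (|d| + 1))) * (|d| + 1) = c / 2 := by field_simp
      calc t * |d| ≤ (c / (2 * (|d| + 1))) * (|d| + 1) := by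
            apply mul_le_mul htc (by linarith) (abs_nonneg d) (div_pos hcpos hdpos).le
        _ = c / 2 := e1
    have hcd : 0 < c + t * d := by
      have h2 : -(t * |d|) ≤ t * d := by
        have := mul_le_mul_of_nonneg_left (neg_abs_le d) htpos.le
        rw [mul_neg] at this; linarith
      linarith
    have hle : φ ((1 - t) • pm + t • p) ≤ φ pm := hpmmax hptP
    have hpm' : φ pm = a * bb := rfl
    nlinarith [mul_pos htpos hcd]
  -- the triangle
  have h2a : 1 ≤ 2 * a := by
    have h3 := hsupp (q + u) hu
    rw [add_sub_cancel_left, hσu, hτu] at h3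
    nlinarith
  have h2b : 1 ≤ 2 * bb := by
    have h3 := hsupp (q + v) hv
    rw [add_sub_cancel_left, hσv, hτv] at h3
    nlinarith
  refine ⟨q + (2 * a) • u, q + (2 * bb) • v, ⟨?_, ?_, ?_, ?_⟩, ?_⟩
  · -- P ⊆ convexHull
    intro p hp
    have hx0 : 0 ≤ σ (p - q) := (hcone p hp).1
    have hy0 : 0 ≤ τ (p - q) := (hcone p hp).2
    have hsum := hsupp p hp
    set x := σ (p - q) with hx
    set y := τ (p - q) with hy
    have hpdec : p = q + (x • u + y • v) := by
      have h4 := hdec (p - q)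
      rw [← hx, ← hy] at h4
      rw [← h4]; abel
    set s1 := x / (2 * a) with hs1
    set s2 := y / (2 * bb) with hs2
    have hs10 : 0 ≤ s1 := div_nonneg hx0 (by linarith)
    have hs20 : 0 ≤ s2 := div_nonneg hy0 (by linarith)
    have hss : s1 + s2 ≤ 1 := by
      rw [hs1, hs2, div_add_div _ _ (by linarith : (2:ℝ)*a ≠ 0) (by linarith : (2:ℝ)*bb ≠ 0),
        div_le_one (by nlinarith : (0:ℝ) < 2*a*(2*bb))]
      nlinarith
    rcases (add_nonneg hs10 hs20).eq_or_lt with hs | hs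
    · -- degenerate: p = q, impossible
      exfalso
      have h5 : s1 = 0 ∧ s2 = 0 := by constructor <;> linarith
      have hx1 : x = 0 := by
        have := h5.1; rw [hs1, div_eq_zero_iff] at this
        rcases this with h | h; exact h; linarith
      have hy1 : y = 0 := by
        have := h5.2; rw [hs2, div_eq_zero_iff] at this
        rcases this with h | h; exact h; linarith
      rw [hx1, hy1] at hpdec
      simp at hpdec
      rw [hpdec] at hp
      exact hq hp
    · have hsne : s1 + s2 ≠ 0 := hs.ne'
      have hx2 : x = s1 * (2 * a) := by rw [hs1]; field_simp
      have hy2 : y = s2 * (2 * bb) := by rw [hs2]; field_simp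
      set B := q + (2 * a) • u with hB
      set C := q + (2 * bb) • v with hC
      have hzseg : B + (s2 / (s1 + s2)) • (C - B) ∈ segment ℝ B C := by
        rw [segment_eq_image']
        refine ⟨s2 / (s1 + s2), ⟨div_nonneg hs20 hs.le, ?_⟩, rfl⟩
        rw [div_le_one hs]; linarith
      have hBhull : B ∈ convexHull ℝ ({q, B, C} : Set E2) :=
        subset_convexHull ℝ _ (by simp)
      have hChull : C ∈ convexHull ℝ ({q, B, C} : Set E2) :=
        subset_convexHull ℝ _ (by simp)
      have hzhull : B + (s2 / (s1 + s2)) • (C - B) ∈ convexHull ℝ ({q, B, C} : Set E2) :=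
        (convex_convexHull ℝ _).segment_subset hBhull hChull hzseg
      have hqhull : q ∈ convexHull ℝ ({q, B, C} : Set E2) :=
        subset_convexHull ℝ _ (by simp)
      have hpseg : p ∈ segment ℝ q (B + (s2 / (s1 + s2)) • (C - B)) := by
        rw [segment_eq_image']
        refine ⟨s1 + s2, ⟨hs.le, hss⟩, ?_⟩
        rw [hpdec, hx2, hy2, hB, hC]
        match_scalars <;> field_simp <;> ring
      exact (convex_convexHull ℝ _).segment_subset hqhull hzhull hpseg
  · -- segment q B meets P
    refine ⟨q + u, ?_, hu⟩
    rw [segment_eq_image']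
    refine ⟨1 / (2 * a), ⟨by positivity, by rw [div_le_one (by linarith)]; linarith⟩, ?_⟩
    show q + (1 / (2 * a)) • ((q + (2 * a) • u) - q) = q + u
    rw [add_sub_cancel_left, smul_smul, one_div, inv_mul_cancel₀ (by linarith : (2:ℝ)*a ≠ 0), one_smul]
  · refine ⟨q + v, ?_, hv⟩
    rw [segment_eq_image']
    refine ⟨1 / (2 * bb), ⟨by positivity, by rw [div_le_one (by linarith)]; linarith⟩, ?_⟩
    show q + (1 / (2 * bb)) • ((q + (2 * bb) • v) - q) = q + v
    rw [add_sub_cancel_left, smul_smul, one_div, inv_mul_cancel₀ (by linarith : (2:ℝ)*bb ≠ 0), one_smul]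
  · -- segment B C meets P : the midpoint is pm
    refine ⟨pm, ?_, hpmP⟩
    have hmid : midpoint ℝ (q + (2 * a) • u) (q + (2 * bb) • v) = pm := by
      have hpm2 : pm = q + (a • u + bb • v) := by
        have h4 := hdec (pm - q)
        rw [← ha, ← hbb] at h4
        rw [← h4]; abel
      rw [midpoint_eq_smul_add, invOf_eq_inv, hpm2]
      module
    rw [← hmid]
    exact midpoint_mem_segment _ _
  · have hpm2 : pm = q + (a • u + bb • v) := by
      have h4 := hdec (pm - q)
      rw [← ha, ← hbb] at h4
      rw [← h4]; abel
    have hmid : midpoint ℝ (q + (2 * a) • u) (q + (2 * bb) • v) = pm := by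
      rw [midpoint_eq_smul_add, invOf_eq_inv, hpm2]
      module
    rw [hmid]; exact hpmP

lemma mem_hull_triple {q b c p : E2} :
    p ∈ convexHull ℝ ({q, b, c} : Set E2) ↔
      ∃ μ ∈ Icc (0:ℝ) 1, ∃ t ∈ Icc (0:ℝ) 1, p = q + μ • (b + t • (c - b) - q) := by
  rw [convexHull_insert ⟨b, by simp⟩, mem_convexJoin]
  constructor
  · rintro ⟨xx, hxx, z, hz, hpz⟩
    rw [mem_singleton_iff] at hxx
    subst hxx
    rw [convexHull_pair, segment_eq_image'] at hz
    obtain ⟨t, ht, rfl⟩ := hz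
    rw [segment_eq_image'] at hpz
    obtain ⟨μ, hμ, rfl⟩ := hpz
    exact ⟨μ, hμ, t, ht, rfl⟩
  · rintro ⟨μ, hμ, t, ht, rfl⟩
    refine ⟨q, mem_singleton q, b + t • (c - b), ?_, ?_⟩
    · rw [convexHull_pair, segment_eq_image']
      exact ⟨t, ht, rfl⟩
    · rw [segment_eq_image']
      exact ⟨μ, hμ, rfl⟩

lemma coord_sq_pos {z : E2} (hz : z ≠ 0) : 0 < (z 0) ^ 2 + (z 1) ^ 2 := by
  have h : z 0 ≠ 0 ∨ z 1 ≠ 0 := by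
    by_contra hcon
    push_neg at hcon
    exact hz (by ext i; fin_cases i <;> simp [hcon.1, hcon.2])
  rcases h with h | h <;> positivity

lemma circ_symm {q b c : E2} {P : Set E2} (h : Circumscribes q b c P) :
    Circumscribes q c b P := by
  obtain ⟨h1, h2, h3, h4⟩ := h
  refine ⟨?_, h3, h2, ?_⟩
  · have he : ({q, c, b} : Set E2) = {q, b, c} := by rw [Set.pair_comm c b]
    rw [he]; exact h1
  · rw [segment_symm]; exact h4

set_option maxHeartbeats 2000000 in
lemma side_on_ray {P : Set E2} (hPint : (interior P).Nonempty)
    {q : E2} (hq : q ∉ P)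
    {u v : E2} {σ τ : E2 →L[ℝ] ℝ}
    (hu : q + u ∈ P) (hv : q + v ∈ P)
    (hdec : ∀ x : E2, x = σ x • u + τ x • v)
    {b c : E2} (hC : Circumscribes q b c P)
    (hσb : 0 ≤ σ (b - q)) (hτb : 0 ≤ τ (b - q)) :
    σ (b - q) = 0 ∨ τ (b - q) = 0 := by
  have hbq : b ≠ q := by
    rintro rfl
    obtain ⟨w, hw1, hw2⟩ := hC.2.1
    rw [segment_same] at hw1
    rw [mem_singleton_iff] at hw1
    subst hw1
    exact hq hw2
  have hbqne : b - q ≠ 0 := sub_ne_zero.mpr hbq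
  -- rotation functional
  set k0 : E2 →L[ℝ] ℝ :=
    (b - q) 0 • EuclideanSpace.proj 1 - (b - q) 1 • EuclideanSpace.proj 0 with hk0
  have hk0a : ∀ x : E2, k0 x = (b - q) 0 * x 1 - (b - q) 1 * x 0 := by
    intro x; simp [hk0]
  have hk0b : k0 (b - q) = 0 := by rw [hk0a]; ring
  have hk0c : k0 (c - q) ≠ 0 := by
    intro h0
    have hcb : k0 (c - b) = 0 := by
      have e : c - b = (c - q) - (b - q) := by abel
      rw [e, map_sub, h0, hk0b, sub_zero]
    have hlin : ∀ p ∈ P, k0 p = k0 q := by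
      intro p hp
      obtain ⟨μ, hμ, t, ht, hpe⟩ := mem_hull_triple.mp (hC.1 hp)
      have hpq : p - q = μ • (b + t • (c - b) - q) := by rw [hpe]; abel
      have : k0 (p - q) = μ * (k0 (b - q) + t * k0 (c - b)) := by
        rw [hpq, map_smul, smul_eq_mul]
        congr 1
        have e2 : b + t • (c - b) - q = (b - q) + t • (c - b) := by abel
        rw [e2, map_add, map_smul, smul_eq_mul]
      rw [hk0b, hcb, mul_zero, add_zero, mul_zero, map_sub] at this
      linarith
    have hzero := hyper_zero hPint k0 (k0 q) hlin
    have : k0 ((b - q) 0 • EuclideanSpace.single 1 1 - (b - q) 1 • EuclideanSpace.single 0 1)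
        = ((b - q) 0) ^ 2 + ((b - q) 1) ^ 2 := by
      rw [hk0a]
      have e0 : ((b - q) 0 • EuclideanSpace.single 1 1 - (b - q) 1 • EuclideanSpace.single 0 1 : E2) 0
          = -((b - q) 1) := by simp [EuclideanSpace.single_apply]
      have e1 : ((b - q) 0 • EuclideanSpace.single 1 1 - (b - q) 1 • EuclideanSpace.single 0 1 : E2) 1
          = (b - q) 0 := by simp [EuclideanSpace.single_apply]
      rw [e0, e1]; ring
    rw [hzero] at this
    simp at this
    exact absurd this.symm (coord_sq_pos hbqne).ne'
  -- choose sign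
  obtain ⟨k, hkb, hkc⟩ : ∃ k : E2 →L[ℝ] ℝ, k (b - q) = 0 ∧ 0 < k (c - q) := by
    rcases hk0c.lt_or_gt with h | h
    · exact ⟨-k0, by simp [hk0b], by simpa using h⟩
    · exact ⟨k0, hk0b, h⟩
  have hkP : ∀ p ∈ P, 0 ≤ k (p - q) := by
    intro p hp
    obtain ⟨μ, hμ, t, ht, hpe⟩ := mem_hull_triple.mp (hC.1 hp)
    have hpq : p - q = μ • (b + t • (c - b) - q) := by rw [hpe]; abel
    have e2 : b + t • (c - b) - q = (b - q) + t • ((c - q) - (b - q)) := by abel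
    rw [hpq, e2, map_smul, map_add, hkb, map_smul, k.map_sub (c - q) (b - q), hkb]
    simp only [smul_eq_mul, zero_add, sub_zero]
    nlinarith [mul_nonneg (mul_nonneg hμ.1 ht.1) hkc.le]
  have hku : 0 ≤ k u := by
    have := hkP (q + u) hu
    rwa [add_sub_cancel_left] at this
  have hkv : 0 ≤ k v := by
    have := hkP (q + v) hv
    rwa [add_sub_cancel_left] at this
  by_contra hcon
  push_neg at hcon
  obtain ⟨h1, h2⟩ := hcon
  have hσbp : 0 < σ (b - q) := hσb.lt_of_ne (Ne.symm h1)
  have hτbp : 0 < τ (b - q) := hτb.lt_of_ne (Ne.symm h2)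
  have hkbd : σ (b - q) * k u + τ (b - q) * k v = 0 := by
    have := congrArg k (hdec (b - q))
    rw [map_add, map_smul, map_smul, smul_eq_mul, smul_eq_mul] at this
    rw [← this]; exact hkb
  have hku0 : k u = 0 := by nlinarith
  have hkv0 : k v = 0 := by nlinarith
  have : k (c - q) = 0 := by
    have := congrArg k (hdec (c - q))
    rw [map_add, map_smul, map_smul, smul_eq_mul, smul_eq_mul, hku0, hkv0] at this
    rw [this]; ring
  linarith

lemma core_alg {β γ β' γ' : ℝ} (hβ : 0 < β) (hγ : 0 < γ) (hβ' : 0 < β') (hγ' : 0 < γ')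
    (h1 : β * γ' + γ * β' ≤ 2 * (β * γ)) (h2 : β * γ' + γ * β' ≤ 2 * (β' * γ')) :
    β = β' ∧ γ = γ' := by
  have hT : 0 < β * γ' + γ * β' := by positivity
  have hmul : (β * γ' + γ * β') * (β * γ' + γ * β') ≤ (2 * (β * γ)) * (2 * (β' * γ')) :=
    mul_le_mul h1 h2 hT.le (by positivity)
  have hsq : (β * γ' - γ * β') ^ 2 ≤ 0 := by nlinarith
  have hzero : (β * γ' - γ * β') ^ 2 = 0 := le_antisymm hsq (sq_nonneg _)
  have he : β * γ' = γ * β' := by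
    have := (pow_eq_zero_iff (two_ne_zero)).mp hzero
    linarith
  have hg1 : γ' ≤ γ := le_of_mul_le_mul_left (by linarith : β * γ' ≤ β * γ) hβ
  have hb1 : β' ≤ β := le_of_mul_le_mul_left (by linarith : γ * β' ≤ γ * β) hγ
  have hb2 : β ≤ β' := le_of_mul_le_mul_right (by linarith : β * γ' ≤ β' * γ') hγ'
  have hg2 : γ ≤ γ' := le_of_mul_le_mul_right (by linarith : γ * β' ≤ γ' * β') hβ'
  exact ⟨le_antisymm hb2 hb1, le_antisymm hg2 hg1⟩

set_option maxHeartbeats 2000000 in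
lemma shape_lemma {P : Set E2} (hPint : (interior P).Nonempty)
    {q : E2} (hq : q ∉ P)
    {u v : E2} {σ τ : E2 →L[ℝ] ℝ}
    (hu : q + u ∈ P) (hv : q + v ∈ P)
    (hdec : ∀ x : E2, x = σ x • u + τ x • v)
    (hσu : σ u = 1) (hσv : σ v = 0) (hτu : τ u = 0) (hτv : τ v = 1)
    (hcone : ∀ p ∈ P, 0 ≤ σ (p - q) ∧ 0 ≤ τ (p - q))
    {b c : E2} (hC : Circumscribes q b c P) :
    ∃ β γ : ℝ, 0 < β ∧ 0 < γ ∧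
      ((b = q + β • u ∧ c = q + γ • v) ∨ (b = q + β • v ∧ c = q + γ • u)) := by
  have hne : ∀ e : E2, (segment ℝ q e ∩ P).Nonempty → e ≠ q := by
    intro e hseg he
    obtain ⟨w, hw1, hw2⟩ := hseg
    rw [he, segment_same, mem_singleton_iff] at hw1
    exact hq (hw1 ▸ hw2)
  have hcoord : ∀ e : E2, (segment ℝ q e ∩ P).Nonempty →
      0 ≤ σ (e - q) ∧ 0 ≤ τ (e - q) := by
    intro e hseg
    obtain ⟨w, hw1, hw2⟩ := hseg
    rw [segment_eq_image'] at hw1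
    obtain ⟨θ, hθ, hwe⟩ := hw1
    have hwq : w - q = θ • (e - q) := by rw [← hwe]; module
    have hθ0 : 0 < θ := by
      rcases hθ.1.lt_or_eq with h | h
      · exact h
      · exfalso
        rw [← h, zero_smul] at hwq
        have hwq2 : w = q := by
          have := sub_eq_zero.mp hwq; exact this
        exact hq (hwq2 ▸ hw2)
    have h1 := (hcone w hw2).1
    have h2 := (hcone w hw2).2
    rw [hwq, map_smul, smul_eq_mul] at h1 h2
    exact ⟨(mul_nonneg_iff_of_pos_left hθ0).mp h1, (mul_nonneg_iff_of_pos_left hθ0).mp h2⟩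
  have hbq := hne b hC.2.1
  have hcq := hne c hC.2.2.1
  obtain ⟨hσb, hτb⟩ := hcoord b hC.2.1
  obtain ⟨hσc, hτc⟩ := hcoord c hC.2.2.1
  have hb := side_on_ray hPint hq hu hv hdec hC hσb hτb
  have hc := side_on_ray hPint hq hu hv hdec (circ_symm hC) hσc hτc
  -- extraction helpers
  have mkv : ∀ e : E2, e ≠ q → σ (e - q) = 0 → 0 ≤ τ (e - q) →
      e - q = τ (e - q) • v ∧ 0 < τ (e - q) := by
    intro e he h0 hnn
    have hd := hdec (e - q)
    rw [h0, zero_smul, zero_add] at hd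
    refine ⟨hd, ?_⟩
    rcases hnn.lt_or_eq with h | h
    · exact h
    · exfalso
      rw [← h, zero_smul] at hd
      exact he (sub_eq_zero.mp hd)
  have mku : ∀ e : E2, e ≠ q → τ (e - q) = 0 → 0 ≤ σ (e - q) →
      e - q = σ (e - q) • u ∧ 0 < σ (e - q) := by
    intro e he h0 hnn
    have hd := hdec (e - q)
    rw [h0, zero_smul, add_zero] at hd
    refine ⟨hd, ?_⟩
    rcases hnn.lt_or_eq with h | h
    · exact h
    · exfalso
      rw [← h, zero_smul] at hd
      exact he (sub_eq_zero.mp hd)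
  -- same-ray contradictions
  have hsame : ∀ (e : E2) (k : E2 →L[ℝ] ℝ), k e = 1 →
      (∀ βx γx : ℝ, ¬ (b - q = βx • e ∧ c - q = γx • e)) ∨ True := fun _ _ _ => Or.inr trivial
  have hsame_ray : ∀ (w0 : E2) (k : E2 →L[ℝ] ℝ) (βx γx : ℝ), k w0 = 0 → k ≠ 0 →
      b - q = βx • w0 → c - q = γx • w0 → False := by
    intro w0 k βx γx hkw hkne hb1 hc1
    have hlin : ∀ p ∈ P, k p = k q := by
      intro p hp
      obtain ⟨μ, hμ, t, ht, hpe⟩ := mem_hull_triple.mp (hC.1 hp)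
      have hval : p - q = μ • (βx • w0 + t • (γx • w0 - βx • w0)) := by
        rw [hpe, show b + t • (c - b) - q = (b - q) + t • ((c - q) - (b - q)) by abel, hb1, hc1]
        module
      have h5 : k (p - q) = 0 := by
        rw [hval, map_smul, map_add, map_smul, map_smul, map_sub, map_smul, map_smul, hkw]
        simp
      rw [map_sub] at h5
      linarith
    exact hkne (hyper_zero hPint k (k q) hlin)
  have hτne : τ ≠ 0 := by
    intro h0
    rw [h0] at hτv
    simp at hτv
  have hσne : σ ≠ 0 := by
    intro h0
    rw [h0] at hσu
    simp at hσu
  rcases hb with hb0 | hb0 <;> rcases hc with hc0 | hc0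
  · -- both on v-ray : impossible
    obtain ⟨hbe, hbp⟩ := mkv b hbq hb0 hτb
    obtain ⟨hce, hcp⟩ := mkv c hcq hc0 hτc
    exact absurd (hsame_ray v σ _ _ hσv hσne hbe hce) (by simp)
  · -- b on v-ray, c on u-ray : swapped
    obtain ⟨hbe, hbp⟩ := mkv b hbq hb0 hτb
    obtain ⟨hce, hcp⟩ := mku c hcq hc0 hσc
    exact ⟨τ (b - q), σ (c - q), hbp, hcp,
      Or.inr ⟨sub_eq_iff_eq_add'.mp hbe, sub_eq_iff_eq_add'.mp hce⟩⟩
  · -- b on u-ray, c on v-ray : straight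
    obtain ⟨hbe, hbp⟩ := mku b hbq hb0 hσb
    obtain ⟨hce, hcp⟩ := mkv c hcq hc0 hτc
    exact ⟨σ (b - q), τ (c - q), hbp, hcp,
      Or.inl ⟨sub_eq_iff_eq_add'.mp hbe, sub_eq_iff_eq_add'.mp hce⟩⟩
  · -- both on u-ray : impossible
    obtain ⟨hbe, hbp⟩ := mku b hbq hb0 hσb
    obtain ⟨hce, hcp⟩ := mku c hcq hc0 hσc
    exact absurd (hsame_ray u τ _ _ hτu hτne hbe hce) (by simp)

set_option maxHeartbeats 1000000 in
lemma support_ineq {P : Set E2} {q u v : E2} {σ τ : E2 →L[ℝ] ℝ}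
    (hσu : σ u = 1) (hσv : σ v = 0) (hτu : τ u = 0) (hτv : τ v = 1)
    {β γ : ℝ} (hβ : 0 < β) (hγ : 0 < γ)
    (hsub : P ⊆ convexHull ℝ {q, q + β • u, q + γ • v}) :
    ∀ p ∈ P, σ (p - q) * γ + τ (p - q) * β ≤ β * γ := by
  intro p hp
  obtain ⟨μ, hμ, t, ht, hpe⟩ := mem_hull_triple.mp (hsub hp)
  have hpq : p - q = μ • (β • u + t • (γ • v - β • u)) := by
    rw [hpe]; module
  have hσp : σ (p - q) = μ * (β * (1 - t)) := by
    rw [hpq, map_smul, map_add, map_smul, map_smul, map_sub, map_smul, map_smul, hσu, hσv]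
    simp only [smul_eq_mul]; ring
  have hτp : τ (p - q) = μ * (t * γ) := by
    rw [hpq, map_smul, map_add, map_smul, map_smul, map_sub, map_smul, map_smul, hτu, hτv]
    simp only [smul_eq_mul]; ring
  rw [hσp, hτp]
  nlinarith [mul_nonneg (mul_nonneg (sub_nonneg.mpr hμ.2) hβ.le) hγ.le]

set_option maxHeartbeats 1000000 in
lemma uniq_core {P : Set E2} {q u v : E2} {σ τ : E2 →L[ℝ] ℝ}
    (hσu : σ u = 1) (hσv : σ v = 0) (hτu : τ u = 0) (hτv : τ v = 1)
    {β γ β' γ' : ℝ} (hβ : 0 < β) (hγ : 0 < γ) (hβ' : 0 < β') (hγ' : 0 < γ')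
    (hsub : P ⊆ convexHull ℝ {q, q + β • u, q + γ • v})
    (hsub' : P ⊆ convexHull ℝ {q, q + β' • u, q + γ' • v})
    (hm : midpoint ℝ (q + β • u) (q + γ • v) ∈ P)
    (hm' : midpoint ℝ (q + β' • u) (q + γ' • v) ∈ P) :
    β = β' ∧ γ = γ' := by
  have hmc : ∀ β0 γ0 : ℝ,
      midpoint ℝ (q + β0 • u) (q + γ0 • v) - q = (β0 / 2) • u + (γ0 / 2) • v := by
    intro β0 γ0
    rw [midpoint_eq_smul_add, invOf_eq_inv]
    match_scalars <;> ring
  have ec : ∀ β0 γ0 : ℝ,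
      σ (midpoint ℝ (q + β0 • u) (q + γ0 • v) - q) = β0 / 2 ∧
      τ (midpoint ℝ (q + β0 • u) (q + γ0 • v) - q) = γ0 / 2 := by
    intro β0 γ0
    rw [hmc, map_add, map_add, map_smul, map_smul, map_smul, map_smul, hσu, hσv, hτu, hτv]
    constructor <;> simp
  have h1 := support_ineq hσu hσv hτu hτv hβ hγ hsub _ hm'
  rw [(ec β' γ').1, (ec β' γ').2] at h1
  have h2 := support_ineq hσu hσv hτu hτv hβ' hγ' hsub' _ hm
  rw [(ec β γ).1, (ec β γ).2] at h2
  exact core_alg hβ hγ hβ' hγ' (by linarith) (by linarith)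

theorem exists_unique_circumscribing_triangle_with_midpoint
    (P : Set (EuclideanSpace ℝ (Fin 2)))
    (hPc : IsCompact P) (hPconv : Convex ℝ P) (hPint : (interior P).Nonempty)
    (q : EuclideanSpace ℝ (Fin 2)) (hq : q ∉ P) :
    (∃ b c : EuclideanSpace ℝ (Fin 2),
        Circumscribes q b c P ∧ midpoint ℝ b c ∈ P) ∧
    (∀ b c b' c' : EuclideanSpace ℝ (Fin 2),
        Circumscribes q b c P → midpoint ℝ b c ∈ P →
        Circumscribes q b' c' P → midpoint ℝ b' c' ∈ P →
        ({b, c} : Set (EuclideanSpace ℝ (Fin 2))) = {b', c'}) := by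
  obtain ⟨u, v, σ, τ, hu, hv, hdec, hσu, hσv, hτu, hτv, hcone⟩ :=
    cone_setup hPc hPconv hPint hq
  refine ⟨exists_triangle hPc hPconv hPint hq hu hv hdec hσu hσv hτu hτv hcone, ?_⟩
  intro b c b' c' hC hm hC' hm'
  obtain ⟨β, γ, hβ, hγ, hbc⟩ :=
    shape_lemma hPint hq hu hv hdec hσu hσv hτu hτv hcone hC
  obtain ⟨β', γ', hβ', hγ', hbc'⟩ :=
    shape_lemma hPint hq hu hv hdec hσu hσv hτu hτv hcone hC'
  obtain ⟨hb1, hc1⟩ | ⟨hb1, hc1⟩ := hbc <;> obtain ⟨hb2, hc2⟩ | ⟨hb2, hc2⟩ := hbc' <;>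
      subst hb1 <;> subst hc1 <;> subst hb2 <;> subst hc2
  · -- both straight
    have h := uniq_core hσu hσv hτu hτv hβ hγ hβ' hγ' hC.1 hC'.1 hm hm'
    rw [h.1, h.2]
  · -- primed swapped
    have hsub' : P ⊆ convexHull ℝ {q, q + γ' • u, q + β' • v} := (circ_symm hC').1
    have hm'' : midpoint ℝ (q + γ' • u) (q + β' • v) ∈ P := by
      rwa [midpoint_comm] at hm'
    have h := uniq_core hσu hσv hτu hτv hβ hγ hγ' hβ' hC.1 hsub' hm hm''
    rw [h.1, h.2, Set.pair_comm]
  · -- unprimed swapped : use coordinates with u, v exchanged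
    have hsub : P ⊆ convexHull ℝ {q, q + γ • u, q + β • v} := (circ_symm hC).1
    have hm2 : midpoint ℝ (q + γ • u) (q + β • v) ∈ P := by
      rwa [midpoint_comm] at hm
    have h := uniq_core hσu hσv hτu hτv hγ hβ hβ' hγ' hsub hC'.1 hm2 hm'
    rw [h.1, h.2, Set.pair_comm]
  · -- both swapped : exchange roles of u and v
    have h := uniq_core hτv hτu hσv hσu hβ hγ hβ' hγ' hC.1 hC'.1 hm hm'
    rw [h.1, h.2]
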